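/- Let k be a field, N ⊂ gl_n the nilpotent cone, and z ⊂ gl_n the line of scalar matrices. The addition map add: N × z → gl_n, (N, z) ↦ N + z, is a finite morphism of varieties. -/

import Mathlib

open MvPolynomial Polynomial

set_option maxHeartbeats 1000000 in
set_option synthInstance.maxHeartbeats 400000 in
theorem addition_map_finite (k : Type*) [Field k] (n : ℕ) (hn : 0 < n) :
    RingHom.Finite
      ((Ideal.Quotient.mk (MvPolynomial.vanishingIdeal k
          {v : (Fin n × Fin n) ⊕ Unit → k |
            IsNilpotent (Matrix.of fun i j : Fin n => v (Sum.inl (i, j)))})).comp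
        ((MvPolynomial.aeval (R := k) (fun q : Fin n × Fin n =>
          (MvPolynomial.X (Sum.inl q) : MvPolynomial ((Fin n × Fin n) ⊕ Unit) k)
            + if q.1 = q.2 then MvPolynomial.X (Sum.inr ()) else 0)
          : MvPolynomial (Fin n × Fin n) k →ₐ[k]
              MvPolynomial ((Fin n × Fin n) ⊕ Unit) k).toRingHom)) := by
  set S : Set (((Fin n × Fin n) ⊕ Unit) → k) :=
    {v | IsNilpotent (Matrix.of fun i j : Fin n => v (Sum.inl (i, j)))} with hS
  set I := MvPolynomial.vanishingIdeal k S with hI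
  set mkI := Ideal.Quotient.mk I with hmkI
  set ψ : MvPolynomial (Fin n × Fin n) k →ₐ[k] MvPolynomial ((Fin n × Fin n) ⊕ Unit) k :=
    MvPolynomial.aeval (R := k) (fun q : Fin n × Fin n =>
      (MvPolynomial.X (Sum.inl q) : MvPolynomial ((Fin n × Fin n) ⊕ Unit) k)
        + if q.1 = q.2 then MvPolynomial.X (Sum.inr ()) else 0) with hψ
  set φ := mkI.comp ψ.toRingHom with hφ
  letI : Algebra (MvPolynomial (Fin n × Fin n) k)
      (MvPolynomial ((Fin n × Fin n) ⊕ Unit) k ⧸ I) := φ.toAlgebra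
  -- the class of the variable `c`
  set c : MvPolynomial ((Fin n × Fin n) ⊕ Unit) k ⧸ I := mkI (X (Sum.inr ())) with hc
  -- det of generic nilpotent matrix vanishes
  have hdet : mkI (Matrix.det (Matrix.of fun i j : Fin n => X (R := k) (Sum.inl (i, j)))) = 0 := by
    rw [Ideal.Quotient.eq_zero_iff_mem, hI, MvPolynomial.mem_vanishingIdeal_iff]
    intro v hv
    have : (MvPolynomial.eval v)
        ((Matrix.of fun i j : Fin n => X (R := k) (Sum.inl (i, j))).det)
        = (Matrix.of fun i j : Fin n => v (Sum.inl (i, j))).det := by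
      rw [RingHom.map_det]
      congr 1
      ext i j
      simp [Matrix.map_apply, RingHom.mapMatrix_apply]
    change (MvPolynomial.eval v) _ = 0
    rw [RingHom.map_det] at this ⊢
    rw [this]
    obtain ⟨m, hm⟩ := hv
    have hm0 : m ≠ 0 := by
      rintro rfl
      have h1 := congrFun (congrFun hm ⟨0, hn⟩) ⟨0, hn⟩
      simp [Matrix.one_apply] at h1
    have hdm : (Matrix.of fun i j : Fin n => v (Sum.inl (i, j))).det ^ m = 0 := by
      rw [← Matrix.det_pow, hm, @Matrix.det_zero (Fin n) _ _ k _ (Fin.pos_iff_nonempty.mp hn)]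
    exact (pow_eq_zero_iff hm0).mp hdm
  -- the generic matrix and its characteristic polynomial
  set G : Matrix (Fin n) (Fin n) (MvPolynomial (Fin n × Fin n) k) :=
    Matrix.of fun i j => X (i, j) with hG
  -- c is integral over the image of φ
  have halg : algebraMap (MvPolynomial (Fin n × Fin n) k)
      (MvPolynomial ((Fin n × Fin n) ⊕ Unit) k ⧸ I) = φ := rfl
  have hcint : IsIntegral (MvPolynomial (Fin n × Fin n) k) c := by
    refine ⟨G.charpoly, G.charpoly_monic, ?_⟩
    show Polynomial.eval₂ _ c G.charpoly = 0
    rw [halg, Polynomial.eval₂_eq_eval_map, ← Matrix.charpoly_map]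
    have hGmap : G.map φ = (Matrix.of fun i j : Fin n => mkI (X (Sum.inl (i, j))))
        + Matrix.diagonal (fun _ : Fin n => c) := by
      ext i j
      simp only [hG, Matrix.map_apply, Matrix.of_apply, hφ, RingHom.comp_apply,
        AlgHom.toRingHom_eq_coe, RingHom.coe_coe, hψ, MvPolynomial.aeval_X,
        Matrix.add_apply, Matrix.diagonal_apply]
      by_cases h : i = j
      · subst h
        rw [if_pos rfl, if_pos rfl, RingHom.map_add, hc]
      · rw [if_neg h, if_neg h, add_zero, add_zero]
    rw [hGmap]
    -- evaluate the characteristic polynomial at c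
    rw [Matrix.charpoly, Matrix.charmatrix, ← Polynomial.coe_evalRingHom,
      RingHom.map_det (R := (MvPolynomial ((Fin n × Fin n) ⊕ Unit) k ⧸ I)[X])
        (S := MvPolynomial ((Fin n × Fin n) ⊕ Unit) k ⧸ I),
      RingHom.mapMatrix_apply]
    have hdet' : (Matrix.of fun i j : Fin n => mkI (X (R := k) (Sum.inl (i, j)))).det = 0 := by
      have heq : (Matrix.of fun i j : Fin n => mkI (X (R := k) (Sum.inl (i, j))))
          = (Matrix.of fun i j : Fin n => X (R := k) (Sum.inl (i, j))).map mkI := by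
        ext i j; simp [Matrix.map_apply]
      rw [heq, ← RingHom.mapMatrix_apply, ← RingHom.map_det, hdet]
    have hfinal : (-(Matrix.of fun i j : Fin n => mkI (X (R := k) (Sum.inl (i, j))))).det = 0 := by
      rw [Matrix.det_neg, hdet', mul_zero]
    refine Eq.trans ?_ hfinal
    congr 1
    ext i j
    simp only [Matrix.map_apply, Matrix.sub_apply, Matrix.scalar_apply, Matrix.diagonal_apply,
      Matrix.add_apply, Matrix.of_apply, Matrix.neg_apply, Polynomial.coe_evalRingHom,
      Polynomial.eval_sub, Polynomial.eval_X, Polynomial.eval_C, Polynomial.eval_zero,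
      Polynomial.eval_add]
    by_cases h : i = j
    · subst h
      simp
    · simp [h]
  -- the quotient is generated over the image of φ by c
  have hadj : Algebra.adjoin (MvPolynomial (Fin n × Fin n) k) ({c} :
      Set (MvPolynomial ((Fin n × Fin n) ⊕ Unit) k ⧸ I)) = ⊤ := by
    rw [eq_top_iff]
    rintro b -
    obtain ⟨p, rfl⟩ := Ideal.Quotient.mk_surjective (I := I) b
    induction p using MvPolynomial.induction_on with
    | C a =>
        have : algebraMap (MvPolynomial (Fin n × Fin n) k)
            (MvPolynomial ((Fin n × Fin n) ⊕ Unit) k ⧸ I) (MvPolynomial.C a)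
            = mkI (MvPolynomial.C a) := by
          rw [halg, hφ, RingHom.comp_apply]
          simp [hψ]
        rw [← this]
        exact Subalgebra.algebraMap_mem _ _
    | add p q hp hq => rw [RingHom.map_add]; exact add_mem hp hq
    | mul_X p s hp =>
        rw [RingHom.map_mul]
        refine mul_mem hp ?_
        cases s with
        | inr u =>
            cases u
            exact Algebra.subset_adjoin rfl
        | inl q =>
            have hXq : mkI (X (Sum.inl q)) = algebraMap (MvPolynomial (Fin n × Fin n) k) _
                (X q) - (if q.1 = q.2 then c else 0) := by
              rw [halg, hφ, RingHom.comp_apply]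
              simp only [AlgHom.toRingHom_eq_coe, RingHom.coe_coe, hψ, MvPolynomial.aeval_X]
              rw [RingHom.map_add]
              by_cases h : q.1 = q.2 <;> simp [h, hc]
            rw [hXq]
            refine sub_mem (Subalgebra.algebraMap_mem _ _) ?_
            by_cases h : q.1 = q.2
            · simp only [h, if_true]; exact Algebra.subset_adjoin rfl
            · rw [if_neg h]; exact zero_mem _
  -- conclude: module-finite
  show Module.Finite (MvPolynomial (Fin n × Fin n) k)
    (MvPolynomial ((Fin n × Fin n) ⊕ Unit) k ⧸ I)
  rw [Module.finite_def]
  have := hcint.fg_adjoin_singleton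
  rwa [hadj, Algebra.top_toSubmodule] at this
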